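/- Let X be a Polish metric space, let d : X × X → ℝ be a symmetric measurable function with d(x, x) = 0 for all x ∈ X, and let Q, P be Borel probability measures on X for which all relevant integrals of d are finite. Let x₁, …, xₙ be n independent Q-distributed random variables and let Q_n = (1/n) ∑ᵢ δ_{xᵢ} be the empirical measure. Then E_{x₁…xₙ∼Q}[ E_d(Q_n, P)² ] = E_d(Q, P)² + (1/n)·E_{x,x'∼Q}[ d(x, x') ]. -/

import Mathlib

open MeasureTheory TopologicalSpace
open scoped ENNReal

/-- The generalized energy quantity
`E_d(Q,P)² = 2 E_{x∼Q,y∼P}[d(x,y)] − E_{x,x'∼Q}[d(x,x')] − E_{y,y'∼P}[d(y,y')]`. -/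
noncomputable def energySq {X : Type*} [MeasurableSpace X] (d : X → X → ℝ)
    (Q P : Measure X) : ℝ :=
  2 * (∫ p, d p.1 p.2 ∂(Q.prod P)) - (∫ p, d p.1 p.2 ∂(Q.prod Q))
    - ∫ p, d p.1 p.2 ∂(P.prod P)

/-- The empirical measure `Q_n = (1/n) ∑ᵢ δ_{xᵢ}` of a sample `x : Fin n → X`. -/
noncomputable def empiricalMeasure {X : Type*} [MeasurableSpace X] {n : ℕ}
    (x : Fin n → X) : Measure X :=
  (n : ℝ≥0∞)⁻¹ • ∑ i, Measure.dirac (x i)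

section Helpers

variable {α β : Type*} [MeasurableSpace α] [MeasurableSpace β]

lemma my_integrable_dirac {E : Type*} [NormedAddCommGroup E] {f : α → E} (hf : StronglyMeasurable f)
    (a : α) : Integrable f (Measure.dirac a) := by
  refine ⟨hf.aestronglyMeasurable, ?_⟩
  rw [HasFiniteIntegral, lintegral_dirac' a hf.enorm]
  exact enorm_lt_top

lemma my_smul_prod (c : ℝ≥0∞) (μ : Measure α) (ν : Measure β) [SFinite μ] [SFinite ν] :
    (c • μ).prod ν = c • μ.prod ν := by
  ext s hs
  rw [Measure.prod_apply hs, lintegral_smul_measure, Measure.smul_apply,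
    Measure.prod_apply hs, smul_eq_mul]

lemma my_prod_smul (c : ℝ≥0∞) (μ : Measure α) (ν : Measure β) [SFinite μ] [SFinite ν] :
    μ.prod (c • ν) = c • μ.prod ν := by
  ext s hs
  simp only [Measure.prod_apply hs, Measure.smul_apply, smul_eq_mul]
  rw [← lintegral_const_mul _ (measurable_measure_prodMk_left hs)]

lemma my_map_eval_pi {X : Type*} [MeasurableSpace X] (Q : Measure X) [IsProbabilityMeasure Q]
    {n : ℕ} (i : Fin n) :
    Measure.map (fun x : Fin n → X => x i) (Measure.pi fun _ => Q) = Q := by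
  ext s hs
  rw [Measure.map_apply (measurable_pi_apply i) hs]
  have : (fun x : Fin n → X => x i) ⁻¹' s
      = Set.pi Set.univ (Function.update (fun _ => Set.univ) i s) := by
    ext x
    simp [Function.update_apply]
  rw [this, Measure.pi_pi]
  have hval : ∀ k, Q (Function.update (fun _ => Set.univ) i s k)
      = Function.update (fun _ => (1 : ℝ≥0∞)) i (Q s) k := by
    intro k
    simp only [Function.update_apply]
    split_ifs <;> simp
  simp only [hval]
  rw [Finset.prod_update_of_mem (Finset.mem_univ i)]
  simp

lemma my_map_evalPair_pi {X : Type*} [MeasurableSpace X] (Q : Measure X) [IsProbabilityMeasure Q]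
    {n : ℕ} {i j : Fin n} (hij : i ≠ j) :
    Measure.map (fun x : Fin n → X => (x i, x j)) (Measure.pi fun _ => Q) = Q.prod Q := by
  refine (Measure.prod_eq (μ := Q) (ν := Q) fun s t hs ht => ?_).symm
  rw [Measure.map_apply ((measurable_pi_apply i).prodMk (measurable_pi_apply j)) (hs.prod ht)]
  have : (fun x : Fin n → X => (x i, x j)) ⁻¹' (s ×ˢ t)
      = Set.pi Set.univ (Function.update (Function.update (fun _ => Set.univ) i s) j t) := by
    ext x
    simp only [Set.mem_preimage, Set.mem_prod, Set.mem_pi, Set.mem_univ, true_implies,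
      Function.update_apply]
    constructor
    · rintro ⟨h1, h2⟩ k
      by_cases hk : k = j
      · simp [hk, h2]
      · by_cases hk' : k = i <;> simp [hk, hk', h1, hij]
    · intro h
      have h1 := h i
      have h2 := h j
      simp [hij, if_neg hij] at h1 h2
      exact ⟨h1, h2⟩
  rw [this, Measure.pi_pi]
  have hval : ∀ k, Q (Function.update (Function.update (fun _ => Set.univ) i s) j t k)
      = Function.update (Function.update (fun _ => (1 : ℝ≥0∞)) i (Q s)) j (Q t) k := by
    intro k
    simp only [Function.update_apply]
    split_ifs <;> simp
  simp only [hval]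
  rw [Finset.prod_update_of_mem (Finset.mem_univ j), Finset.sdiff_singleton_eq_erase]
  rw [← Finset.prod_erase_mul _ _ (Finset.mem_erase.2 ⟨hij, Finset.mem_univ i⟩)]
  have : ∀ k ∈ (Finset.univ.erase j).erase i,
      Function.update (fun _ => (1 : ℝ≥0∞)) i (Q s) k = 1 := by
    intro k hk
    simp [Function.update_apply, Finset.mem_erase.1 hk |>.1]
  rw [Finset.prod_congr rfl this]
  simp [Function.update_apply, mul_comm]

end Helpers

/-- **Exact bias of the empirical squared energy distance (V-statistic).**
Let `d` be a symmetric measurable kernel with `d(x,x) = 0` on a Polish metric space, and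
let `Q, P` be Borel probability measures for which all relevant integrals of `d` are
finite. Drawing `x₁, …, xₙ` i.i.d. from `Q` and letting `Q_n` be the empirical measure,
`E_{x₁…xₙ∼Q}[ E_d(Q_n, P)² ] = E_d(Q, P)² + (1/n) E_{x,x'∼Q}[d(x,x')]`. -/
theorem expectation_energySq_empirical
    {X : Type*} [MetricSpace X] [SeparableSpace X] [CompleteSpace X]
    [MeasurableSpace X] [BorelSpace X]
    (d : X → X → ℝ) (hd : Measurable fun p : X × X => d p.1 p.2)
    (hsym : ∀ x y, d x y = d y x) (hzero : ∀ x, d x x = 0)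
    (Q P : Measure X) [IsProbabilityMeasure Q] [IsProbabilityMeasure P]
    (hQQ : Integrable (fun p : X × X => d p.1 p.2) (Q.prod Q))
    (hPP : Integrable (fun p : X × X => d p.1 p.2) (P.prod P))
    (hQP : Integrable (fun p : X × X => d p.1 p.2) (Q.prod P))
    (n : ℕ) (hn : 0 < n) :
    ∫ x : Fin n → X, energySq d (empiricalMeasure x) P ∂(Measure.pi fun _ => Q)
      = energySq d Q P + (1 / n) * ∫ p, d p.1 p.2 ∂(Q.prod Q) := by
  set π : Measure (Fin n → X) := Measure.pi (fun _ => Q) with hπ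
  set J : X → ℝ := fun a => ∫ y, d a y ∂P with hJ
  set IQP : ℝ := ∫ p, d p.1 p.2 ∂(Q.prod P) with hIQP
  set IQQ : ℝ := ∫ p, d p.1 p.2 ∂(Q.prod Q) with hIQQ
  set IPP : ℝ := ∫ p, d p.1 p.2 ∂(P.prod P) with hIPP
  have hnR : (n : ℝ) ≠ 0 := Nat.cast_ne_zero.2 hn.ne'
  set c : ℝ := (n : ℝ)⁻¹ with hc
  -- the a.e. pointwise identity
  have hQae : ∀ᵐ a ∂Q, Integrable (fun y => d a y) P := hQP.prod_right_ae
  have hae : ∀ᵐ x ∂π, ∀ i, Integrable (fun y => d (x i) y) P := by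
    rw [MeasureTheory.ae_all_iff]
    intro i
    refine ae_of_ae_map (f := fun x : Fin n → X => x i)
      (p := fun a => Integrable (fun y => d a y) P)
      (measurable_pi_apply i).aemeasurable ?_
    rw [my_map_eval_pi Q i]
    exact hQae
  -- pointwise key computation
  have hrwEmp : ∀ x : Fin n → X, empiricalMeasure x
      = (n : ℝ≥0∞)⁻¹ • Measure.sum (fun i => Measure.dirac (x i)) := by
    intro x; rw [empiricalMeasure, Measure.sum_fintype]
  have key : ∀ x : Fin n → X, (∀ i, Integrable (fun y => d (x i) y) P) →
      energySq d (empiricalMeasure x) P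
        = 2 * (c * ∑ i, J (x i)) - c * (c * ∑ i, ∑ j, d (x i) (x j)) - IPP := by
    intro x hx
    have hint1 : ∀ i : Fin n, Integrable (fun p : X × X => d p.1 p.2)
        ((Measure.dirac (x i)).prod P) := by
      intro i
      rw [Measure.dirac_prod]
      exact (integrable_map_measure
        (hd.aestronglyMeasurable) measurable_prodMk_left.aemeasurable).2 (hx i)
    have hterm1 : ∫ p, d p.1 p.2 ∂((empiricalMeasure x).prod P) = c * ∑ i, J (x i) := by
      rw [hrwEmp x, my_smul_prod, integral_smul_measure, Measure.prod_sum_left,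
        Measure.sum_fintype, integral_finset_sum_measure (fun i _ => hint1 i)]
      congr 1
      · simp [ENNReal.toReal_inv, hc]
      · refine Finset.sum_congr rfl fun i _ => ?_
        rw [Measure.dirac_prod, integral_map measurable_prodMk_left.aemeasurable
          hd.aestronglyMeasurable]
    have hterm2 : ∫ p, d p.1 p.2 ∂((empiricalMeasure x).prod (empiricalMeasure x))
        = c * (c * ∑ i, ∑ j, d (x i) (x j)) := by
      rw [hrwEmp x, my_smul_prod, my_prod_smul, integral_smul_measure, integral_smul_measure,
        Measure.prod_sum, Measure.sum_fintype, integral_finset_sum_measure]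
      · simp only [Measure.dirac_prod_dirac]
        rw [Fintype.sum_prod_type]
        simp only [integral_dirac' _ _ hd.stronglyMeasurable]
        simp [ENNReal.toReal_inv, mul_assoc, hc]
      · intro p _
        rw [Measure.dirac_prod_dirac]
        exact my_integrable_dirac hd.stronglyMeasurable _
    rw [energySq, hterm1, hterm2]
  -- integrate
  have hJQ : Integrable J Q := hQP.integral_prod_left
  have hJint : ∀ i : Fin n, Integrable (fun x => J (x i)) π := by
    intro i
    have h1 : Integrable J (Measure.map (fun x : Fin n → X => x i) π) := by
      rw [my_map_eval_pi Q i]; exact hJQ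
    exact (integrable_map_measure h1.aestronglyMeasurable
      (measurable_pi_apply i).aemeasurable).1 h1
  have hJval : ∀ i : Fin n, ∫ x, J (x i) ∂π = IQP := by
    intro i
    have h1 : Integrable J (Measure.map (fun x : Fin n → X => x i) π) := by
      rw [my_map_eval_pi Q i]; exact hJQ
    have h2 := integral_map (φ := fun x : Fin n → X => x i) (μ := π) (f := J)
      (measurable_pi_apply i).aemeasurable h1.aestronglyMeasurable
    rw [my_map_eval_pi Q i] at h2
    have h3 : ∫ a, J a ∂Q = IQP := by
      rw [hIQP, integral_prod _ hQP]
    rw [← h3]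
    exact h2.symm
  have hdint : ∀ i j : Fin n, Integrable (fun x => d (x i) (x j)) π := by
    intro i j
    rcases eq_or_ne i j with rfl | hij
    · have : (fun x : Fin n → X => d (x i) (x i)) = fun _ => (0 : ℝ) := by
        funext x; exact hzero (x i)
      rw [this]; exact integrable_const 0
    · have h1 : Integrable (fun p : X × X => d p.1 p.2)
          (Measure.map (fun x : Fin n → X => (x i, x j)) π) := by
        rw [my_map_evalPair_pi Q hij]; exact hQQ
      exact (integrable_map_measure h1.aestronglyMeasurable
        ((measurable_pi_apply i).prodMk (measurable_pi_apply j)).aemeasurable).1 h1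
  have hdval : ∀ i j : Fin n, i ≠ j → ∫ x, d (x i) (x j) ∂π = IQQ := by
    intro i j hij
    have h1 : Integrable (fun p : X × X => d p.1 p.2)
        (Measure.map (fun x : Fin n → X => (x i, x j)) π) := by
      rw [my_map_evalPair_pi Q hij]; exact hQQ
    have h2 := integral_map (φ := fun x : Fin n → X => (x i, x j)) (μ := π)
      (f := fun p : X × X => d p.1 p.2)
      ((measurable_pi_apply i).prodMk (measurable_pi_apply j)).aemeasurable
      h1.aestronglyMeasurable
    rw [my_map_evalPair_pi Q hij] at h2
    exact h2.symm
  -- put it together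
  have hintRHS1 : Integrable (fun x => 2 * (c * ∑ i, J (x i))) π :=
    ((integrable_finset_sum _ fun i _ => hJint i).const_mul c).const_mul 2
  have hintRHS2 : Integrable (fun x => c * (c * ∑ i, ∑ j, d (x i) (x j))) π :=
    (((integrable_finset_sum _ fun i _ =>
      integrable_finset_sum _ fun j _ => hdint i j).const_mul c).const_mul c)
  have hmain : ∫ x, energySq d (empiricalMeasure x) P ∂π
      = ∫ x, (2 * (c * ∑ i, J (x i)) - c * (c * ∑ i, ∑ j, d (x i) (x j)) - IPP) ∂π := by
    refine integral_congr_ae ?_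
    filter_upwards [hae] with x hx
    exact key x hx
  rw [hmain]
  have hsub : Integrable
      (fun x => 2 * (c * ∑ i, J (x i)) - c * (c * ∑ i, ∑ j, d (x i) (x j))) π :=
    hintRHS1.sub hintRHS2
  rw [integral_sub hsub (integrable_const IPP),
    integral_sub hintRHS1 hintRHS2, integral_const_mul, integral_const_mul, integral_const_mul, integral_const_mul,
    integral_finset_sum _ (fun i _ => hJint i),
    integral_finset_sum _ (fun i _ => integrable_finset_sum _ fun j _ => hdint i j)]
  have hsum1 : ∑ i : Fin n, ∫ x, J (x i) ∂π = n * IQP := by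
    simp [hJval, Finset.sum_const, Finset.card_univ]
  have hsum2 : ∑ i : Fin n, ∫ x, (∑ j, d (x i) (x j)) ∂π = (n * n - n) * IQQ := by
    have hinner : ∀ i : Fin n, ∫ x, (∑ j, d (x i) (x j)) ∂π = (n - 1) * IQQ := by
      intro i
      rw [integral_finset_sum _ (fun j _ => hdint i j)]
      have : ∀ j : Fin n, ∫ x, d (x i) (x j) ∂π = if i = j then 0 else IQQ := by
        intro j
        split_ifs with h
        · subst h
          have : (fun x : Fin n → X => d (x i) (x i)) = fun _ => (0 : ℝ) := by
            funext x; exact hzero (x i)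
          rw [this, integral_const]; simp
        · exact hdval i j h
      simp only [this]
      have : ∀ j : Fin n, (if i = j then (0:ℝ) else IQQ)
          = IQQ - (if i = j then IQQ else 0) := by
        intro j; split_ifs <;> ring
      simp only [this]
      rw [Finset.sum_sub_distrib, Finset.sum_ite_eq]
      simp [Finset.sum_const, Finset.card_univ]
      ring
    simp only [hinner]
    simp [Finset.sum_const, Finset.card_univ]
    ring
  rw [hsum1, hsum2, integral_const]
  have : π Set.univ = 1 := measure_univ
  rw [energySq, ← hIQP, ← hIQQ, ← hIPP]
  simp only [measure_univ, probReal_univ, ENNReal.toReal_one, smul_eq_mul, one_mul, hc]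
  field_simp
  ring
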